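/- Suppose |I_k| ≥ 3 for all k ∈ K. Choose α > 0 such that 4α π_i ⪯ B_i for all i, and set Z_i = α π_i. Then for every r ∈ (0,1] and every i ∈ I, r Z_i ≺_{H_i} F_i(rZ); in particular rZ ⪯ F(rZ). -/

import Mathlib

open Matrix BigOperators Filter Topology

/-- Orthogonal projection onto the coordinate subspace determined by `S`. -/
noncomputable def proj (K : Type*) [Fintype K] [DecidableEq K] (S : Finset K) :
    Matrix K K ℝ :=
  Matrix.diagonal (fun k => if k ∈ S then (1 : ℝ) else 0)

/-- `B ∈ S_≻^{H}` : symmetric nonnegative definite, vanishing on vectors orthogonal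
to the coordinate subspace `H` given by `S`, and strictly positive definite on `H`. -/
def SPDOn {K : Type*} [Fintype K] [DecidableEq K] (S : Finset K) (B : Matrix K K ℝ) : Prop :=
  B.PosSemidef ∧
  (∀ x : K → ℝ, (∀ j, j ∉ S → x j = 0) → x ≠ 0 → 0 < x ⬝ᵥ (B *ᵥ x)) ∧
  (∀ x : K → ℝ, (∀ j, j ∈ S → x j = 0) → B *ᵥ x = 0)

/-- The inverse of `B` computed on the coordinate subspace given by `S`, extended by zero
(`B^{-H}` in the paper). -/
noncomputable def invOn {K : Type*} [Fintype K] [DecidableEq K] (S : Finset K)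
    (B : Matrix K K ℝ) : Matrix K K ℝ :=
  proj K S * (B + proj K Sᶜ)⁻¹ * proj K S

/-- `A ≺_{H} B` : the difference `B - A` belongs to `S_≻^{H}`. -/
def ltOn {K : Type*} [Fintype K] [DecidableEq K] (S : Finset K) (A B : Matrix K K ℝ) : Prop :=
  SPDOn S (B - A)

/-- The best-response map `F_i(X) = (B_i^{-H_i} + π_i (X_{-i})⁻¹ π_i)^{-H_i}`. -/
noncomputable def Fmap {I K : Type*} [Fintype I] [DecidableEq I] [Fintype K] [DecidableEq K]
    (Ki : I → Finset K) (B : I → Matrix K K ℝ) (X : I → Matrix K K ℝ) (i : I) :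
    Matrix K K ℝ :=
  invOn (Ki i) (invOn (Ki i) (B i) +
    proj K (Ki i) * (∑ j ∈ Finset.univ.erase i, X j)⁻¹ * proj K (Ki i))

section Aux
variable {K : Type*} [Fintype K] [DecidableEq K]

lemma herm_transpose {A : Matrix K K ℝ} (hA : A.IsHermitian) : Aᵀ = A := by
  rw [← conjTranspose_eq_transpose_of_trivial]; exact hA

/-- The variational inequality `2⟨x,y⟩ - ⟨y,Ay⟩ ≤ ⟨x, A⁻¹ x⟩` for `A` positive definite. -/
lemma key_ineq (A : Matrix K K ℝ) (hA : A.PosDef) (x y : K → ℝ) :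
    2*(x ⬝ᵥ y) - y ⬝ᵥ (A *ᵥ y) ≤ x ⬝ᵥ (A⁻¹ *ᵥ x) := by
  have hd : IsUnit A.det := hA.det_pos.ne'.isUnit
  have h0 : (0:ℝ) ≤ (x - A *ᵥ y) ⬝ᵥ (A⁻¹ *ᵥ (x - A *ᵥ y)) := by
    simpa [star_trivial] using hA.inv.posSemidef.dotProduct_mulVec_nonneg (x - A *ᵥ y)
  have e1 : A⁻¹ *ᵥ (x - A *ᵥ y) = A⁻¹ *ᵥ x - y := by
    rw [mulVec_sub, mulVec_mulVec, Matrix.nonsing_inv_mul _ hd, one_mulVec]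
  have e3 : (A *ᵥ y) ⬝ᵥ (A⁻¹ *ᵥ x) = y ⬝ᵥ x := by
    rw [dotProduct_comm, dotProduct_mulVec, ← mulVec_transpose, herm_transpose hA.isHermitian,
      mulVec_mulVec, Matrix.mul_nonsing_inv _ hd, one_mulVec, dotProduct_comm]
  have e4 : (A *ᵥ y) ⬝ᵥ y = y ⬝ᵥ (A *ᵥ y) := dotProduct_comm _ _
  have e5 : y ⬝ᵥ x = x ⬝ᵥ y := dotProduct_comm _ _
  rw [e1, sub_dotProduct, dotProduct_sub, dotProduct_sub, e3] at h0
  linarith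

/-- Loewner-antitonicity of the inverse, in quadratic-form form. -/
lemma inv_form_le (A C : Matrix K K ℝ) (hA : A.PosDef) (hC : C.PosDef)
    (h : (C - A).PosSemidef) (x : K → ℝ) :
    x ⬝ᵥ (C⁻¹ *ᵥ x) ≤ x ⬝ᵥ (A⁻¹ *ᵥ x) := by
  set y := C⁻¹ *ᵥ x with hy
  have hd : IsUnit C.det := hC.det_pos.ne'.isUnit
  have hCy : C *ᵥ y = x := by
    rw [hy, mulVec_mulVec, Matrix.mul_nonsing_inv _ hd, one_mulVec]
  have h2 : y ⬝ᵥ (A *ᵥ y) ≤ y ⬝ᵥ (C *ᵥ y) := by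
    have := h.dotProduct_mulVec_nonneg y
    simp only [star_trivial, sub_mulVec, dotProduct_sub] at this
    linarith
  have h3 : y ⬝ᵥ (C *ᵥ y) = x ⬝ᵥ y := by rw [hCy, dotProduct_comm]
  have := key_ineq A hA x y
  linarith

lemma proj_mulVec_apply (S : Finset K) (x : K → ℝ) (k : K) :
    (proj K S *ᵥ x) k = if k ∈ S then x k else 0 := by
  simp [proj, mulVec_diagonal, ite_mul]

lemma proj_herm (S : Finset K) : (proj K S).IsHermitian :=
  isHermitian_diagonal_of_self_adjoint _ (by funext k; simp [star_trivial])

lemma proj_posSemidef (S : Finset K) : (proj K S).PosSemidef :=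
  PosSemidef.diagonal (by intro k; dsimp only; split <;> norm_num)

lemma proj_quad (S : Finset K) (x : K → ℝ) :
    x ⬝ᵥ (proj K S *ᵥ x) = ∑ k ∈ S, (x k)^2 := by
  simp only [dotProduct, proj_mulVec_apply, mul_ite, mul_zero, ← pow_two]
  rw [← Finset.sum_filter]
  congr 1
  ext k; simp

lemma proj_dot (S : Finset K) (x : K → ℝ) :
    (proj K S *ᵥ x) ⬝ᵥ (proj K S *ᵥ x) = x ⬝ᵥ (proj K S *ᵥ x) := by
  simp only [dotProduct, proj_mulVec_apply]
  congr 1; funext k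
  split <;> simp

lemma quad_PAP (S : Finset K) (A : Matrix K K ℝ) (x : K → ℝ) :
    x ⬝ᵥ ((proj K S * A * proj K S) *ᵥ x)
      = (proj K S *ᵥ x) ⬝ᵥ (A *ᵥ (proj K S *ᵥ x)) := by
  rw [← mulVec_mulVec, ← mulVec_mulVec, dotProduct_mulVec x (proj K S),
    ← mulVec_transpose, herm_transpose (proj_herm S)]

lemma diag_quad (v : K → ℝ) (x : K → ℝ) :
    x ⬝ᵥ (Matrix.diagonal v *ᵥ x) = ∑ k, v k * (x k)^2 := by
  simp only [dotProduct, mulVec_diagonal, pow_two]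
  congr 1; funext k; ring

lemma dot_self_nonneg (x : K → ℝ) : 0 ≤ x ⬝ᵥ x :=
  Finset.sum_nonneg fun k _ => mul_self_nonneg _

lemma dot_self_eq (x : K → ℝ) : x ⬝ᵥ x = ∑ k, (x k)^2 := by
  simp only [dotProduct, pow_two]

end Aux

/-- Sub-solution: with `|I_k| ≥ 3`, `α > 0` such that `4α π_i ⪯ B_i`, and `Z_i = α π_i`,
for every `r ∈ (0,1]` one has `r Z_i ≺_{H_i} F_i(rZ)`; in particular `rZ ⪯ F(rZ)`. -/
theorem stmt_6 {I K : Type*} [Fintype I] [DecidableEq I] [Fintype K] [DecidableEq K]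
    (Ki : I → Finset K)
    (hacc : ∀ k : K, 3 ≤ (Finset.univ.filter (fun i : I => k ∈ Ki i)).card)
    (B : I → Matrix K K ℝ) (hB : ∀ i, SPDOn (Ki i) (B i))
    (α : ℝ) (hα : 0 < α)
    (hαB : ∀ i, (B i - (4 * α) • proj K (Ki i)).PosSemidef)
    (Z : I → Matrix K K ℝ) (hZ : ∀ i, Z i = α • proj K (Ki i))
    (r : ℝ) (hr : r ∈ Set.Ioc (0 : ℝ) 1) :
    (∀ i, ltOn (Ki i) (r • Z i) (Fmap Ki B (fun j => r • Z j) i)) ∧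
    (∀ i, (Fmap Ki B (fun j => r • Z j) i - r • Z i).PosSemidef) := by
  obtain ⟨hr0, hr1⟩ := hr
  have hrα : 0 < r * α := mul_pos hr0 hα
  have main : ∀ i, ltOn (Ki i) (r • Z i) (Fmap Ki B (fun j => r • Z j) i) := by
    intro i
    set S := Ki i with hS
    set M := B i + proj K Sᶜ with hMdef
    have hBi := hB i
    -- M is positive definite
    have hMpd : M.PosDef := by
      refine PosDef.of_dotProduct_mulVec_pos (hBi.1.1.add (proj_herm _)) fun x hx => ?_
      simp only [star_trivial, hMdef, add_mulVec, dotProduct_add]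
      have hQx : x ⬝ᵥ ((proj K Sᶜ) *ᵥ x) = ∑ k ∈ Sᶜ, (x k)^2 := proj_quad _ x
      by_cases hsupp : ∀ j, j ∉ S → x j = 0
      · have h1 := hBi.2.1 x hsupp hx
        have h2 : 0 ≤ x ⬝ᵥ ((proj K Sᶜ) *ᵥ x) := by rw [hQx]; positivity
        linarith
      · push_neg at hsupp
        obtain ⟨j, hjS, hjx⟩ := hsupp
        have h1 : 0 ≤ x ⬝ᵥ (B i *ᵥ x) := by simpa [star_trivial] using hBi.1.dotProduct_mulVec_nonneg x
        have h2 : 0 < x ⬝ᵥ ((proj K Sᶜ) *ᵥ x) := by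
          rw [hQx]
          exact Finset.sum_pos' (fun k _ => sq_nonneg _)
            ⟨j, Finset.mem_compl.mpr hjS, by nlinarith [sq_nonneg (x j), sq_abs (x j), abs_pos.mpr hjx]⟩
        linarith
    have hMd : IsUnit M.det := hMpd.det_pos.ne'.isUnit
    -- the aggregate matrix W
    set d : K → ℝ := fun k =>
      (r*α) * (((Finset.univ.erase i).filter (fun j => k ∈ Ki j)).card : ℝ) with hd
    have hW : (∑ j ∈ Finset.univ.erase i, r • Z j) = Matrix.diagonal d := by
      have hsum : ∀ j, r • Z j
          = Matrix.diagonal (fun k => if k ∈ Ki j then r*α else 0) := by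
        intro j
        rw [hZ j, smul_smul]
        ext k l
        rcases eq_or_ne k l with h | h
        · simp [proj, h, Matrix.diagonal_apply_eq, mul_ite]
        · simp [proj, Matrix.diagonal_apply_ne _ h]
      rw [Finset.sum_congr rfl (fun j _ => hsum j)]
      ext k l
      rw [Matrix.sum_apply]
      rcases eq_or_ne k l with h | h
      · subst h
        simp only [Matrix.diagonal_apply_eq, hd]
        rw [← Finset.sum_filter, Finset.sum_const, nsmul_eq_mul, mul_comm]
      · simp [Matrix.diagonal_apply_ne _ h]
    have hcard : ∀ k, (2:ℝ) ≤ (((Finset.univ.erase i).filter (fun j => k ∈ Ki j)).card : ℝ) := by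
      intro k
      have h3 := hacc k
      have hsub : Finset.univ.filter (fun j => k ∈ Ki j) ⊆
          insert i ((Finset.univ.erase i).filter (fun j => k ∈ Ki j)) := by
        intro j hj
        rcases eq_or_ne j i with h | h
        · simp [h]
        · exact Finset.mem_insert.mpr (Or.inr (Finset.mem_filter.mpr
            ⟨Finset.mem_erase.mpr ⟨h, Finset.mem_univ j⟩, (Finset.mem_filter.mp hj).2⟩))
      have h4 := Finset.card_le_card hsub
      have h5 := Finset.card_insert_le i ((Finset.univ.erase i).filter (fun j => k ∈ Ki j))
      have : 2 ≤ ((Finset.univ.erase i).filter (fun j => k ∈ Ki j)).card := by omega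
      exact_mod_cast this
    have hd2 : ∀ k, 2*(r*α) ≤ d k := by
      intro k
      rw [hd]
      dsimp only
      nlinarith [hcard k]
    have hd0 : ∀ k, 0 < d k := fun k => lt_of_lt_of_le (by nlinarith) (hd2 k)
    have hWpd : (Matrix.diagonal d).PosDef := Matrix.posDef_diagonal_iff.mpr hd0
    have hWinv : (Matrix.diagonal d)⁻¹ = Matrix.diagonal (fun k => (d k)⁻¹) := by
      apply inv_eq_right_inv
      rw [diagonal_mul_diagonal]
      ext k l
      rcases eq_or_ne k l with h | h
      · subst h
        simp [mul_inv_cancel₀ (hd0 k).ne']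
      · simp [Matrix.diagonal_apply_ne _ h, Matrix.one_apply_ne h]
    have hWq : ∀ x : K → ℝ,
        x ⬝ᵥ ((Matrix.diagonal d)⁻¹ *ᵥ x) ≤ (2*(r*α))⁻¹ * (x ⬝ᵥ x) := by
      intro x
      rw [hWinv, diag_quad, dot_self_eq, Finset.mul_sum]
      refine Finset.sum_le_sum fun k _ => ?_
      have : (d k)⁻¹ ≤ (2*(r*α))⁻¹ :=
        inv_anti₀ (by nlinarith) (hd2 k)
      nlinarith [sq_nonneg (x k)]
    -- the comparison matrix A₀
    set a : K → ℝ := fun k => if k ∈ S then 4*α else 1 with ha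
    have ha0 : ∀ k, 0 < a k := by
      intro k; rw [ha]; dsimp only; split <;> norm_num; linarith
    have hA0pd : (Matrix.diagonal a).PosDef := Matrix.posDef_diagonal_iff.mpr ha0
    have hA0eq : Matrix.diagonal a = (4*α) • (proj K S) + (proj K Sᶜ) := by
      ext k l
      rcases eq_or_ne k l with h | h
      · subst h
        by_cases hk : k ∈ S <;>
          simp [ha, proj, hk, Finset.mem_compl]
      · simp [proj, Matrix.diagonal_apply_ne _ h]
    have hA0le : (M - Matrix.diagonal a).PosSemidef := by
      have : M - Matrix.diagonal a = B i - (4*α) • (proj K S) := by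
        rw [hA0eq, hMdef]; abel
      rw [this]
      exact hαB i
    have hA0inv : (Matrix.diagonal a)⁻¹ = Matrix.diagonal (fun k => (a k)⁻¹) := by
      apply inv_eq_right_inv
      rw [diagonal_mul_diagonal]
      ext k l
      rcases eq_or_ne k l with h | h
      · subst h
        simp [mul_inv_cancel₀ (ha0 k).ne']
      · simp [Matrix.diagonal_apply_ne _ h, Matrix.one_apply_ne h]
    have hMq : ∀ x : K → ℝ, (∀ j, j ∉ S → x j = 0) →
        x ⬝ᵥ (M⁻¹ *ᵥ x) ≤ (4*α)⁻¹ * (x ⬝ᵥ x) := by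
      intro x hx
      have h1 := inv_form_le (Matrix.diagonal a) M hA0pd hMpd hA0le x
      rw [hA0inv, diag_quad] at h1
      refine h1.trans ?_
      rw [dot_self_eq, Finset.mul_sum]
      refine Finset.sum_le_sum fun k _ => ?_
      by_cases h : k ∈ S
      · simp [ha, h]
      · rw [hx k h]; simp
    -- the matrix G
    set G := ((proj K S) * M⁻¹ * (proj K S) + (proj K S) * (Matrix.diagonal d)⁻¹ * (proj K S)) + (proj K Sᶜ) with hGdef
    have hFmap : Fmap Ki B (fun j => r • Z j) i = (proj K S) * G⁻¹ * (proj K S) := by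
      rw [hGdef, ← hW]
      rfl
    have hPMP_herm : ((proj K S) * M⁻¹ * (proj K S)).IsHermitian := by
      have := isHermitian_mul_mul_conjTranspose (proj K S) hMpd.inv.isHermitian
      rwa [(proj_herm S).eq] at this
    have hPWP_herm : ((proj K S) * (Matrix.diagonal d)⁻¹ * (proj K S)).IsHermitian := by
      have := isHermitian_mul_mul_conjTranspose (proj K S) hWpd.inv.isHermitian
      rwa [(proj_herm S).eq] at this
    have hGherm : G.IsHermitian := (hPMP_herm.add hPWP_herm).add (proj_herm _)
    have hProjEq : ∀ x : K → ℝ, (∀ j, j ∉ S → x j = 0) → (proj K S) *ᵥ x = x := by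
      intro x hx
      funext k
      rw [proj_mulVec_apply]
      by_cases h : k ∈ S
      · simp [h]
      · simp [h, hx k h]
    have hGpd : G.PosDef := by
      refine PosDef.of_dotProduct_mulVec_pos hGherm fun x hx => ?_
      simp only [star_trivial, hGdef, add_mulVec, dotProduct_add, quad_PAP]
      by_cases hPx : (proj K S) *ᵥ x = 0
      · obtain ⟨j, hjx⟩ := Function.ne_iff.mp hx
        have hjS : j ∉ S := by
          intro hj
          have := congrFun hPx j
          rw [proj_mulVec_apply] at this
          simp [hj] at this
          exact hjx this
        have h2 : 0 < x ⬝ᵥ ((proj K Sᶜ) *ᵥ x) := by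
          rw [proj_quad]
          exact Finset.sum_pos' (fun k _ => sq_nonneg _)
            ⟨j, Finset.mem_compl.mpr hjS, by nlinarith [sq_nonneg (x j), sq_abs (x j), abs_pos.mpr hjx]⟩
        rw [hPx]
        simpa using h2
      · have h1 : 0 < ((proj K S) *ᵥ x) ⬝ᵥ (M⁻¹ *ᵥ ((proj K S) *ᵥ x)) := by
          simpa [star_trivial] using hMpd.inv.dotProduct_mulVec_pos hPx
        have h2 : 0 ≤ ((proj K S) *ᵥ x) ⬝ᵥ ((Matrix.diagonal d)⁻¹ *ᵥ ((proj K S) *ᵥ x)) := by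
          simpa [star_trivial] using hWpd.inv.posSemidef.dotProduct_mulVec_nonneg ((proj K S) *ᵥ x)
        have h3 : 0 ≤ x ⬝ᵥ ((proj K Sᶜ) *ᵥ x) := by
          simpa [star_trivial] using (proj_posSemidef Sᶜ).dotProduct_mulVec_nonneg x
        linarith
    -- the key quantitative estimates
    set γ : ℝ := (4*α)⁻¹ + (2*(r*α))⁻¹ with hγdef
    have hγ : 0 < γ := by positivity
    have hGq : ∀ x : K → ℝ, (∀ j, j ∉ S → x j = 0) →
        x ⬝ᵥ (G *ᵥ x) ≤ γ * (x ⬝ᵥ x) := by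
      intro x hx
      have hPx := hProjEq x hx
      have hQ0 : x ⬝ᵥ ((proj K Sᶜ) *ᵥ x) = 0 := by
        rw [proj_quad]
        refine Finset.sum_eq_zero fun k hk => ?_
        rw [hx k (Finset.mem_compl.mp hk)]; ring
      simp only [hGdef, add_mulVec, dotProduct_add, quad_PAP, hPx, hQ0, add_zero]
      rw [hγdef, add_mul]
      exact add_le_add (hMq x hx) (hWq x)
    have hGinvq : ∀ x : K → ℝ, (∀ j, j ∉ S → x j = 0) →
        γ⁻¹ * (x ⬝ᵥ x) ≤ x ⬝ᵥ (G⁻¹ *ᵥ x) := by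
      intro x hx
      have hk := key_ineq G hGpd x (γ⁻¹ • x)
      rw [dotProduct_smul, mulVec_smul, smul_dotProduct, dotProduct_smul] at hk
      have h1 := hGq x hx
      have hX := dot_self_nonneg x
      have hγi : 0 < γ⁻¹ := inv_pos.mpr hγ
      have hγγ : γ * γ⁻¹ = 1 := mul_inv_cancel₀ hγ.ne'
      simp only [smul_eq_mul] at hk
      have h6 : γ⁻¹ * (γ⁻¹ * (x ⬝ᵥ (G *ᵥ x))) ≤ γ⁻¹ * (x ⬝ᵥ x) := by
        calc γ⁻¹ * (γ⁻¹ * (x ⬝ᵥ (G *ᵥ x))) ≤ γ⁻¹ * (γ⁻¹ * (γ * (x ⬝ᵥ x))) := by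
              have h7 := mul_le_mul_of_nonneg_left h1 hγi.le
              nlinarith [mul_le_mul_of_nonneg_left h7 hγi.le]
          _ = (γ * γ⁻¹) * (γ⁻¹ * (x ⬝ᵥ x)) := by ring
          _ = γ⁻¹ * (x ⬝ᵥ x) := by rw [hγγ, one_mul]
      linarith
    have hγrα : r*α < γ⁻¹ := by
      have h4 : (r*α) * γ = r/4 + 1/2 := by
        rw [hγdef]
        field_simp
      have h5 : (r*α) * γ < 1 := by rw [h4]; linarith
      have hγi : 0 < γ⁻¹ := inv_pos.mpr hγ
      nlinarith [mul_inv_cancel₀ hγ.ne']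
    -- the difference matrix
    have hZi : r • Z i = (r*α) • (proj K S) := by rw [hZ i, smul_smul, hS]
    have qD : ∀ x : K → ℝ,
        x ⬝ᵥ (((proj K S) * G⁻¹ * (proj K S) - (r*α) • (proj K S)) *ᵥ x)
          = ((proj K S) *ᵥ x) ⬝ᵥ (G⁻¹ *ᵥ ((proj K S) *ᵥ x)) - (r*α) * (((proj K S) *ᵥ x) ⬝ᵥ ((proj K S) *ᵥ x)) := by
      intro x
      rw [sub_mulVec, dotProduct_sub, quad_PAP, smul_mulVec, dotProduct_smul,
        proj_dot]
      simp [smul_eq_mul]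
    have hPsupp : ∀ x : K → ℝ, ∀ j, j ∉ S → ((proj K S) *ᵥ x) j = 0 := by
      intro x j hj
      rw [proj_mulVec_apply]
      simp [hj]
    have hDnonneg : ∀ x : K → ℝ,
        0 ≤ x ⬝ᵥ (((proj K S) * G⁻¹ * (proj K S) - (r*α) • (proj K S)) *ᵥ x) := by
      intro x
      rw [qD x]
      have h1 := hGinvq ((proj K S) *ᵥ x) (hPsupp x)
      have hX := dot_self_nonneg ((proj K S) *ᵥ x)
      nlinarith
    have hDherm : ((proj K S) * G⁻¹ * (proj K S) - (r*α) • (proj K S)).IsHermitian := by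
      have h1 : ((proj K S) * G⁻¹ * (proj K S)).IsHermitian := by
        have := isHermitian_mul_mul_conjTranspose (proj K S) hGpd.inv.isHermitian
        rwa [(proj_herm S).eq] at this
      have h2 : ((r*α) • proj K S).IsHermitian := by
        show ((r*α) • proj K S)ᴴ = _
        rw [Matrix.conjTranspose_smul, (proj_herm S).eq]
        norm_num
      exact h1.sub h2
    rw [ltOn, hFmap, hZi]
    refine ⟨PosSemidef.of_dotProduct_mulVec_nonneg hDherm (fun x => by simpa [star_trivial] using hDnonneg x), ?_, ?_⟩
    · intro x hx hx0
      rw [qD x, hProjEq x hx]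
      have h1 := hGinvq x hx
      have hX : 0 < x ⬝ᵥ x := by
        obtain ⟨j, hjx⟩ := Function.ne_iff.mp hx0
        rw [dot_self_eq]
        exact Finset.sum_pos' (fun k _ => sq_nonneg _) ⟨j, Finset.mem_univ j, by nlinarith [sq_abs (x j), abs_pos.mpr hjx]⟩
      nlinarith
    · intro x hx
      have hPx : (proj K S) *ᵥ x = 0 := by
        funext k
        rw [proj_mulVec_apply]
        by_cases h : k ∈ S
        · simp [h, hx k h]
        · simp [h]
      rw [sub_mulVec, ← mulVec_mulVec, ← mulVec_mulVec, smul_mulVec]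
      rw [hPx]
      simp
  exact ⟨main, fun i => (main i).1⟩
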